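/- Let A be a unital associative ℂ-algebra, a,b,c ∈ ℂ with a ≠ 0, and let σ₁,σ₂ ∈ A be such that (σ₁,σ₂) satisfies the A₃(a,b,c) relations. Let z,v ∈ ℂ with c·z² − b·z − a ≠ 0 and c·v² − b·v − a ≠ 0, and such that 1 − zσᵢ and 1 − vσᵢ are invertible for i = 1,2. Set Hᵢ(w) = σᵢ(1 − wσᵢ)⁻¹ and h(w) = a/(cw² − bw − a). Then H₂(v)H₁(z) − H₂(z)H₁(v) = (v−z)·h(z)·h(v)·(σ₂²σ₁ − σ₂σ₁²). -/

import Mathlib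

/-- The pair `(x, y)` satisfies the defining relations of the algebra `A₃(a,b,c)`. -/
def SatisfiesA3 {A : Type*} [Ring A] [Algebra ℂ A] (a b c : ℂ) (x y : A) : Prop :=
  x ^ 2 * y - y * x ^ 2 = x * y ^ 2 - y ^ 2 * x ∧
  (y * x) * (x + y) - (x + y) * (y * x) =
    a • (x ^ 3 - y ^ 3) + b • (x ^ 2 - y ^ 2) - c • (x - y) ∧
  a • (x * y ^ 3 - x ^ 3 * y) = -b • (y ^ 2 * x - y * x ^ 2) ∧
  a • (y ^ 3 * x - y * x ^ 3) = -b • (y ^ 2 * x - y * x ^ 2) ∧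
  a ^ 2 • (y ^ 4 * x - y * x ^ 4) = (b ^ 2 + a * c) • (y ^ 2 * x - y * x ^ 2)

/-- `H_s(w) = s * (1 - w • s)⁻¹`, with the inverse taken via `Ring.inverse`. -/
noncomputable def Hfun {A : Type*} [Ring A] [Algebra ℂ A] (s : A) (w : ℂ) : A :=
  s * Ring.inverse (1 - w • s)

private lemma A3aux_key3 {A : Type*} [Ring A] [Algebra ℂ A] (a b c : ℂ) (ha : a ≠ 0) (x y : A)
    (hR4 : a • (y ^ 3 * x - y * x ^ 3) = -b • (y ^ 2 * x - y * x ^ 2))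
    (hR5 : a ^ 2 • (y ^ 4 * x - y * x ^ 4) = (b ^ 2 + a * c) • (y ^ 2 * x - y * x ^ 2)) :
    a • (y * ((y ^ 2 * x - y * x ^ 2) * x)) = (-c) • (y ^ 2 * x - y * x ^ 2) := by
  have s1 := congrArg (fun t => y * t) hR4
  have s2 := congrArg (fun t => t * x) hR4
  simp only [mul_smul_comm, smul_mul_assoc] at s1 s2
  have e1 : y * (y ^ 3 * x - y * x ^ 3) = y ^ 4 * x - y ^ 2 * x ^ 3 := by noncomm_ring
  have e2 : y * (y ^ 2 * x - y * x ^ 2) = y ^ 3 * x - y ^ 2 * x ^ 2 := by noncomm_ring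
  have e3 : (y ^ 3 * x - y * x ^ 3) * x = y ^ 3 * x ^ 2 - y * x ^ 4 := by noncomm_ring
  have e4 : (y ^ 2 * x - y * x ^ 2) * x = y ^ 2 * x ^ 2 - y * x ^ 3 := by noncomm_ring
  have e5 : y * ((y ^ 2 * x - y * x ^ 2) * x) = y ^ 3 * x ^ 2 - y ^ 2 * x ^ 3 := by noncomm_ring
  rw [e1, e2] at s1
  rw [e3, e4] at s2
  rw [e5]
  have big : a ^ 2 • (y ^ 3 * x ^ 2 - y ^ 2 * x ^ 3) = (-(a * c)) • (y ^ 2 * x - y * x ^ 2) := by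
    linear_combination (norm := module) a • s1 + a • s2 - hR5 + (-b) • hR4
  have big2 : a • (a • (y ^ 3 * x ^ 2 - y ^ 2 * x ^ 3)) =
      a • ((-c) • (y ^ 2 * x - y * x ^ 2)) := by
    rw [smul_smul, smul_smul, ← pow_two]
    convert big using 2
    ring
  have := congrArg (fun t => a⁻¹ • t) big2
  simpa [inv_smul_smul₀ ha] using this

private lemma A3aux_conj {A : Type*} [Ring A] [Algebra ℂ A] (a b c z v : ℂ) (x y Y : A)
    (k1 : a • (y * Y + Y * x) = (-b) • Y)
    (k3 : a • (y * (Y * x)) = (-c) • Y) :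
    a ^ 2 • ((1 - z • y) * (1 - v • y) * Y * ((1 - z • x) * (1 - v • x))) =
      ((c * z ^ 2 - b * z - a) * (c * v ^ 2 - b * v - a)) • Y := by
  have k1l := congrArg (fun t => y * t) k1
  have k1r := congrArg (fun t => t * x) k1
  have k3l := congrArg (fun t => y * t) k3
  have k3r := congrArg (fun t => t * x) k3
  simp only [mul_smul_comm, smul_mul_assoc, mul_add, add_mul, mul_assoc] at k1l k1r k3l k3r
  have k3lr := congrArg (fun t => y * t) k3r
  simp only [mul_smul_comm] at k3lr
  have hexp : (1 - z • y) * (1 - v • y) * Y * ((1 - z • x) * (1 - v • x)) =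
      Y - (z + v) • (Y * x) + (z * v) • (Y * (x * x)) - (z + v) • (y * Y)
        + ((z + v) * (z + v)) • (y * (Y * x)) - ((z + v) * (z * v)) • (y * (Y * (x * x)))
        + (z * v) • (y * (y * Y)) - ((z + v) * (z * v)) • (y * (y * (Y * x)))
        + ((z * v) * (z * v)) • (y * (y * (Y * (x * x)))) := by
    simp only [mul_sub, sub_mul, mul_add, add_mul, one_mul, mul_one,
      smul_mul_assoc, mul_smul_comm, smul_smul, mul_assoc]
    module
  rw [hexp]
  linear_combination (norm := module)
    (-a * (z + v) - b * (z * v) + c * (z + v) * (z * v)) • k1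
    + (a * (z + v) ^ 2 - 2 * a * (z * v) - c * (z * v) ^ 2) • k3
    + (a * (z * v)) • k1l + (a * (z * v)) • k1r
    + (-a * (z + v) * (z * v)) • k3l + (-a * (z + v) * (z * v)) • k3r
    + (a * (z * v) ^ 2) • k3lr

/-- Relation (2.17) of the paper for `A₃(a,b,c)`, `a ≠ 0`:
`H₂(v)H₁(z) - H₂(z)H₁(v) = (v-z) h(z) h(v) (σ₂²σ₁ - σ₂σ₁²)`
where `h(w) = a/(cw² - bw - a)`. -/
theorem A3_HH_lemma {A : Type*} [Ring A] [Algebra ℂ A] (a b c : ℂ) (ha : a ≠ 0)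
    (σ₁ σ₂ : A) (hrel : SatisfiesA3 a b c σ₁ σ₂)
    (z v : ℂ) (hz : c * z ^ 2 - b * z - a ≠ 0) (hv : c * v ^ 2 - b * v - a ≠ 0)
    (h1z : IsUnit (1 - z • σ₁)) (h2z : IsUnit (1 - z • σ₂))
    (h1v : IsUnit (1 - v • σ₁)) (h2v : IsUnit (1 - v • σ₂)) :
    Hfun σ₂ v * Hfun σ₁ z - Hfun σ₂ z * Hfun σ₁ v =
      ((v - z) * (a / (c * z ^ 2 - b * z - a)) * (a / (c * v ^ 2 - b * v - a))) •
        (σ₂ ^ 2 * σ₁ - σ₂ * σ₁ ^ 2) := by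
  obtain ⟨-, -, -, hR4, hR5⟩ := hrel
  set u1z := 1 - z • σ₁ with hu1z
  set u1v := 1 - v • σ₁ with hu1v
  set u2z := 1 - z • σ₂ with hu2z
  set u2v := 1 - v • σ₂ with hu2v
  set Y := σ₂ ^ 2 * σ₁ - σ₂ * σ₁ ^ 2 with hYdef
  -- the two key identities
  have hb1 : σ₂ * Y + Y * σ₁ = σ₂ ^ 3 * σ₁ - σ₂ * σ₁ ^ 3 := by rw [hYdef]; noncomm_ring
  have k1 : a • (σ₂ * Y + Y * σ₁) = (-b) • Y := by rw [hb1, hYdef]; exact hR4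
  have k3 : a • (σ₂ * (Y * σ₁)) = (-c) • Y := by
    rw [hYdef]; exact A3aux_key3 a b c ha σ₁ σ₂ hR4 hR5
  -- conjugation identity
  have conj := A3aux_conj a b c z v σ₁ σ₂ Y k1 k3
  rw [← hu1z, ← hu1v, ← hu2z, ← hu2v] at conj
  have ha2 : (a : ℂ) ^ 2 ≠ 0 := pow_ne_zero _ ha
  have conj' : u2z * u2v * Y * (u1z * u1v) =
      (((c * z ^ 2 - b * z - a) * (c * v ^ 2 - b * v - a)) / a ^ 2) • Y := by
    have h := congrArg (fun t => (a ^ 2)⁻¹ • t) conj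
    simp only [inv_smul_smul₀ ha2, smul_smul] at h
    rw [h]
    congr 1
    field_simp
  -- commutation lemmas
  have cm2v : u2v * σ₂ = σ₂ * u2v := by
    rw [hu2v]
    simp only [mul_sub, sub_mul, mul_one, one_mul, smul_mul_assoc, mul_smul_comm]
  have cm2z : u2z * σ₂ = σ₂ * u2z := by
    rw [hu2z]
    simp only [mul_sub, sub_mul, mul_one, one_mul, smul_mul_assoc, mul_smul_comm]
  have sw2 : u2z * u2v = u2v * u2z := by
    rw [hu2z, hu2v]
    simp only [mul_sub, sub_mul, mul_one, one_mul, smul_mul_assoc, mul_smul_comm, smul_smul]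
    module
  have sw1 : u1z * u1v = u1v * u1z := by
    rw [hu1z, hu1v]
    simp only [mul_sub, sub_mul, mul_one, one_mul, smul_mul_assoc, mul_smul_comm, smul_smul]
    module
  -- unit products
  have hU2 : IsUnit (u2z * u2v) := h2z.mul h2v
  have hU1 : IsUnit (u1z * u1v) := h1z.mul h1v
  -- absorbing lemmas for Hfun
  have hA : (u2z * u2v) * Hfun σ₂ v = u2z * σ₂ := by
    have h : u2v * (σ₂ * Ring.inverse u2v) = σ₂ := by
      rw [← mul_assoc, cm2v, mul_assoc, Ring.mul_inverse_cancel _ h2v, mul_one]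
    rw [Hfun, ← hu2v, mul_assoc, h]
  have hB : (u2z * u2v) * Hfun σ₂ z = u2v * σ₂ := by
    have h : u2z * (σ₂ * Ring.inverse u2z) = σ₂ := by
      rw [← mul_assoc, cm2z, mul_assoc, Ring.mul_inverse_cancel _ h2z, mul_one]
    rw [Hfun, ← hu2z, sw2, mul_assoc, h]
  have hC : Hfun σ₁ z * (u1z * u1v) = σ₁ * u1v := by
    rw [Hfun, ← hu1z, mul_assoc, ← mul_assoc (Ring.inverse u1z),
      Ring.inverse_mul_cancel _ h1z, one_mul]
  have hD : Hfun σ₁ v * (u1z * u1v) = σ₁ * u1z := by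
    rw [Hfun, ← hu1v, sw1, mul_assoc, ← mul_assoc (Ring.inverse u1v),
      Ring.inverse_mul_cancel _ h1v, one_mul]
  -- cancel the units
  refine hU2.mul_left_cancel (hU1.mul_right_cancel ?_)
  have t1 : (u2z * u2v) * (Hfun σ₂ v * Hfun σ₁ z) * (u1z * u1v) =
      (u2z * σ₂) * (σ₁ * u1v) := by
    rw [← mul_assoc ((u2z * u2v)) (Hfun σ₂ v) (Hfun σ₁ z), hA,
      mul_assoc (u2z * σ₂) (Hfun σ₁ z) (u1z * u1v), hC]
  have t2 : (u2z * u2v) * (Hfun σ₂ z * Hfun σ₁ v) * (u1z * u1v) =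
      (u2v * σ₂) * (σ₁ * u1z) := by
    rw [← mul_assoc ((u2z * u2v)) (Hfun σ₂ z) (Hfun σ₁ v), hB,
      mul_assoc (u2v * σ₂) (Hfun σ₁ v) (u1z * u1v), hD]
  have hE : (u2z * σ₂) * (σ₁ * u1v) - (u2v * σ₂) * (σ₁ * u1z) = (v - z) • Y := by
    rw [hu1z, hu1v, hu2z, hu2v, hYdef]
    have hY : σ₂ ^ 2 * σ₁ - σ₂ * σ₁ ^ 2 = σ₂ * (σ₂ * σ₁) - σ₂ * (σ₁ * σ₁) := by noncomm_ring
    rw [hY]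
    simp only [mul_sub, sub_mul, mul_one, one_mul, smul_mul_assoc, mul_smul_comm,
      smul_smul, mul_assoc]
    module
  calc (u2z * u2v) * (Hfun σ₂ v * Hfun σ₁ z - Hfun σ₂ z * Hfun σ₁ v) * (u1z * u1v)
      = (u2z * u2v) * (Hfun σ₂ v * Hfun σ₁ z) * (u1z * u1v)
        - (u2z * u2v) * (Hfun σ₂ z * Hfun σ₁ v) * (u1z * u1v) := by
        rw [mul_sub, sub_mul]
    _ = (v - z) • Y := by rw [t1, t2, hE]
    _ = (u2z * u2v) *
        (((v - z) * (a / (c * z ^ 2 - b * z - a)) * (a / (c * v ^ 2 - b * v - a))) • Y)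
        * (u1z * u1v) := by
        rw [mul_smul_comm, smul_mul_assoc, conj', smul_smul]
        congr 1
        field_simp
        rw [mul_assoc, mul_div_assoc, div_self, mul_one]
        exact mul_ne_zero (by convert hz using 1; ring) (by convert hv using 1; ring)
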